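/- Let M and K be real symmetric positive definite n×n matrices, K_μ a real n×n matrix, and constants α̃₀ > 0, c_Ω > 0, β > 0 such that ⟨K_μ q, q⟩ ≥ α̃₀ ⟨Kq, q⟩ (coercivity) and c_Ω² ⟨Mq, q⟩ ≤ ⟨Kq, q⟩ (Poincaré inequality) hold for all q ∈ ℝⁿ. Let F_N, U_N, Q_N be subspaces of ℝⁿ with Q_N = U_N (aggregated state and adjoint spaces). Then for every nonzero q ∈ Q_N, sup over nonzero pairs (v, z) ∈ F_N × U_N of (⟨K_μ z, q⟩ − ⟨Mv, q⟩) / ((2β⟨Mv, v⟩ + ⟨Mz, z⟩)^{1/2} · ⟨Kq, q⟩^{1/2}) ≥ c_Ω · α̃₀; that is, the aggregation-stabilized reduced problem satisfies the inf-sup condition with constant c_Ω α̃₀. -/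

import Mathlib

open Matrix

lemma symm_dot {n : ℕ} {M : Matrix (Fin n) (Fin n) ℝ} (hM : M.IsHermitian)
    (x y : Fin n → ℝ) : M *ᵥ x ⬝ᵥ y = M *ᵥ y ⬝ᵥ x := by
  have hT : Mᵀ = M := by simpa using hM.eq
  rw [dotProduct_comm, dotProduct_mulVec, ← mulVec_transpose, hT]

lemma posdef_dot {n : ℕ} {M : Matrix (Fin n) (Fin n) ℝ} (hM : M.PosDef)
    {x : Fin n → ℝ} (hx : x ≠ 0) : 0 < M *ᵥ x ⬝ᵥ x := by
  simpa [dotProduct_comm] using hM.dotProduct_mulVec_pos hx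

lemma possemidef_dot {n : ℕ} {M : Matrix (Fin n) (Fin n) ℝ} (hM : M.PosDef)
    (x : Fin n → ℝ) : 0 ≤ M *ᵥ x ⬝ᵥ x := by
  rcases eq_or_ne x 0 with h | h
  · simp [h]
  · exact (posdef_dot hM h).le

lemma cs_sq {n : ℕ} {M : Matrix (Fin n) (Fin n) ℝ} (hM : M.PosDef)
    (x y : Fin n → ℝ) : (M *ᵥ x ⬝ᵥ y) ^ 2 ≤ (M *ᵥ x ⬝ᵥ x) * (M *ᵥ y ⬝ᵥ y) := by
  have key : discrim (M *ᵥ y ⬝ᵥ y) (2 * (M *ᵥ x ⬝ᵥ y)) (M *ᵥ x ⬝ᵥ x) ≤ 0 := by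
    apply discrim_le_zero
    intro t
    have h := possemidef_dot hM (x + t • y)
    have : M *ᵥ (x + t • y) ⬝ᵥ (x + t • y)
        = (M *ᵥ y ⬝ᵥ y) * (t * t) + 2 * (M *ᵥ x ⬝ᵥ y) * t + (M *ᵥ x ⬝ᵥ x) := by
      simp only [mulVec_add, mulVec_smul, add_dotProduct, dotProduct_add,
        smul_dotProduct, dotProduct_smul, smul_eq_mul]
      rw [symm_dot hM.isHermitian y x]
      ring
    linarith [this ▸ h]
  rw [discrim] at key
  nlinarith [key]

lemma cs_abs {n : ℕ} {M : Matrix (Fin n) (Fin n) ℝ} (hM : M.PosDef)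
    (x y : Fin n → ℝ) :
    |M *ᵥ x ⬝ᵥ y| ≤ Real.sqrt (M *ᵥ x ⬝ᵥ x) * Real.sqrt (M *ᵥ y ⬝ᵥ y) := by
  rw [← Real.sqrt_sq_eq_abs, ← Real.sqrt_mul (possemidef_dot hM x)]
  exact Real.sqrt_le_sqrt (cs_sq hM x y)


/-- Under coercivity `⟨K_μ q, q⟩ ≥ α̃₀ ⟨Kq, q⟩` and the Poincaré inequality
`c_Ω² ⟨Mq, q⟩ ≤ ⟨Kq, q⟩`, if the reduced adjoint space equals the reduced state space
(`Q_N = U_N`, aggregation), then for every nonzero `q ∈ Q_N` the supremum over nonzero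
pairs `(v, z) ∈ F_N × U_N` of
`(⟨K_μ z, q⟩ − ⟨Mv, q⟩) / ((2β⟨Mv,v⟩ + ⟨Mz,z⟩)^{1/2} ⟨Kq,q⟩^{1/2})` is at least `c_Ω α̃₀`. -/
theorem aggregation_reduced_infSup {n : ℕ}
    (M K Kμ : Matrix (Fin n) (Fin n) ℝ) (hM : M.PosDef) (hK : K.PosDef)
    (α₀ cΩ β : ℝ) (hα₀ : 0 < α₀) (hcΩ : 0 < cΩ) (hβ : 0 < β)
    (hcoer : ∀ q : Fin n → ℝ, α₀ * ((K.mulVec q) ⬝ᵥ q) ≤ (Kμ.mulVec q) ⬝ᵥ q)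
    (hpoin : ∀ q : Fin n → ℝ, cΩ ^ 2 * ((M.mulVec q) ⬝ᵥ q) ≤ (K.mulVec q) ⬝ᵥ q)
    (FN UN QN : Submodule ℝ (Fin n → ℝ)) (hagg : QN = UN) :
    ∀ q ∈ QN, q ≠ (0 : Fin n → ℝ) →
      cΩ * α₀ ≤ sSup {r : ℝ | ∃ v z : Fin n → ℝ, v ∈ FN ∧ z ∈ UN ∧ (v, z) ≠ (0, 0) ∧
        r = ((Kμ.mulVec z) ⬝ᵥ q - (M.mulVec v) ⬝ᵥ q) /
          (Real.sqrt (2 * β * ((M.mulVec v) ⬝ᵥ v) + (M.mulVec z) ⬝ᵥ z) *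
            Real.sqrt ((K.mulVec q) ⬝ᵥ q))} := by
  intro q hq hq0
  set a : ℝ := K *ᵥ q ⬝ᵥ q with ha_def
  set m : ℝ := M *ᵥ q ⬝ᵥ q with hm_def
  have ha : 0 < a := posdef_dot hK hq0
  have hm : 0 < m := posdef_dot hM hq0
  have hsa : 0 < Real.sqrt a := Real.sqrt_pos.mpr ha
  have hsm : 0 < Real.sqrt m := Real.sqrt_pos.mpr hm
  -- the witness element
  have hmem : ((Kμ *ᵥ q ⬝ᵥ q - M *ᵥ (0 : Fin n → ℝ) ⬝ᵥ q) /
      (Real.sqrt (2 * β * (M *ᵥ (0 : Fin n → ℝ) ⬝ᵥ (0 : Fin n → ℝ)) + M *ᵥ q ⬝ᵥ q) *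
        Real.sqrt a)) ∈ {r : ℝ | ∃ v z : Fin n → ℝ, v ∈ FN ∧ z ∈ UN ∧ (v, z) ≠ (0, 0) ∧
        r = ((Kμ.mulVec z) ⬝ᵥ q - (M.mulVec v) ⬝ᵥ q) /
          (Real.sqrt (2 * β * ((M.mulVec v) ⬝ᵥ v) + (M.mulVec z) ⬝ᵥ z) *
            Real.sqrt ((K.mulVec q) ⬝ᵥ q))} := by
    refine ⟨0, q, FN.zero_mem, hagg ▸ hq, ?_, rfl⟩
    simp [Prod.ext_iff, hq0]
  -- boundedness of the set
  have hMdet : IsUnit M.det := isUnit_iff_ne_zero.mpr hM.det_pos.ne'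
  set u : Fin n → ℝ := M⁻¹ *ᵥ (Kμᵀ *ᵥ q) with hu_def
  have hMu : M *ᵥ u = Kμᵀ *ᵥ q := by
    rw [hu_def, mulVec_mulVec, Matrix.mul_nonsing_inv _ hMdet, one_mulVec]
  set C₁ : ℝ := Real.sqrt (M *ᵥ u ⬝ᵥ u) with hC1
  set B : ℝ := (C₁ + Real.sqrt m / Real.sqrt (2 * β)) / Real.sqrt a with hB
  have hs2β : 0 < Real.sqrt (2 * β) := Real.sqrt_pos.mpr (by linarith)
  have hbdd : BddAbove {r : ℝ | ∃ v z : Fin n → ℝ, v ∈ FN ∧ z ∈ UN ∧ (v, z) ≠ (0, 0) ∧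
        r = ((Kμ.mulVec z) ⬝ᵥ q - (M.mulVec v) ⬝ᵥ q) /
          (Real.sqrt (2 * β * ((M.mulVec v) ⬝ᵥ v) + (M.mulVec z) ⬝ᵥ z) *
            Real.sqrt ((K.mulVec q) ⬝ᵥ q))} := by
    refine ⟨B, ?_⟩
    rintro r ⟨v, z, -, -, hvz, rfl⟩
    set s : ℝ := 2 * β * (M *ᵥ v ⬝ᵥ v) + M *ᵥ z ⬝ᵥ z with hs_def
    have hvnn : 0 ≤ M *ᵥ v ⬝ᵥ v := possemidef_dot hM v
    have hznn : 0 ≤ M *ᵥ z ⬝ᵥ z := possemidef_dot hM z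
    have hspos : 0 < s := by
      by_cases hv : v = 0
      · have hz : z ≠ 0 := by
          intro hz; exact hvz (by simp [hv, hz])
        have := posdef_dot hM hz
        nlinarith
      · have := posdef_dot hM hv
        nlinarith
    have hD : 0 < Real.sqrt s := Real.sqrt_pos.mpr hspos
    -- numerator bound
    have hKz : Kμ *ᵥ z ⬝ᵥ q = M *ᵥ u ⬝ᵥ z := by
      rw [hMu, dotProduct_comm, dotProduct_mulVec, ← mulVec_transpose]
    have h1 : |M *ᵥ u ⬝ᵥ z| ≤ C₁ * Real.sqrt (M *ᵥ z ⬝ᵥ z) := cs_abs hM u z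
    have h2 : |M *ᵥ v ⬝ᵥ q| ≤ Real.sqrt (M *ᵥ v ⬝ᵥ v) * Real.sqrt m := cs_abs hM v q
    -- sqrt bounds
    have hz_le : Real.sqrt (M *ᵥ z ⬝ᵥ z) ≤ Real.sqrt s := by
      apply Real.sqrt_le_sqrt; nlinarith
    have hv_le : Real.sqrt (2 * β) * Real.sqrt (M *ᵥ v ⬝ᵥ v) ≤ Real.sqrt s := by
      rw [← Real.sqrt_mul (by linarith)]
      apply Real.sqrt_le_sqrt; nlinarith
    have hv_le' : Real.sqrt (M *ᵥ v ⬝ᵥ v) ≤ Real.sqrt s / Real.sqrt (2 * β) :=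
      (le_div_iff₀ hs2β).mpr (by linarith [mul_comm (Real.sqrt (2*β)) (Real.sqrt (M *ᵥ v ⬝ᵥ v))])
    have hC1nn : 0 ≤ C₁ := Real.sqrt_nonneg _
    have hnum : Kμ *ᵥ z ⬝ᵥ q - M *ᵥ v ⬝ᵥ q
        ≤ (C₁ + Real.sqrt m / Real.sqrt (2 * β)) * Real.sqrt s := by
      have b1 : Kμ *ᵥ z ⬝ᵥ q ≤ C₁ * Real.sqrt s := by
        rw [hKz]
        calc M *ᵥ u ⬝ᵥ z ≤ |M *ᵥ u ⬝ᵥ z| := le_abs_self _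
        _ ≤ C₁ * Real.sqrt (M *ᵥ z ⬝ᵥ z) := h1
        _ ≤ C₁ * Real.sqrt s := by apply mul_le_mul_of_nonneg_left hz_le hC1nn
      have b2 : -(M *ᵥ v ⬝ᵥ q) ≤ Real.sqrt m / Real.sqrt (2 * β) * Real.sqrt s := by
        calc -(M *ᵥ v ⬝ᵥ q) ≤ |M *ᵥ v ⬝ᵥ q| := neg_le_abs _
        _ ≤ Real.sqrt (M *ᵥ v ⬝ᵥ v) * Real.sqrt m := h2
        _ ≤ (Real.sqrt s / Real.sqrt (2 * β)) * Real.sqrt m :=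
            mul_le_mul_of_nonneg_right hv_le' hsm.le
        _ = Real.sqrt m / Real.sqrt (2 * β) * Real.sqrt s := by ring
      linarith [b1, b2]
    rw [div_le_iff₀ (by positivity)]
    rw [hB]
    calc Kμ *ᵥ z ⬝ᵥ q - M *ᵥ v ⬝ᵥ q
        ≤ (C₁ + Real.sqrt m / Real.sqrt (2 * β)) * Real.sqrt s := hnum
      _ = (C₁ + Real.sqrt m / Real.sqrt (2 * β)) / Real.sqrt a *
          (Real.sqrt s * Real.sqrt a) := by field_simp
  refine le_trans ?_ (le_csSup hbdd hmem)
  -- lower bound on witness value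
  simp only [mulVec_zero, dotProduct_zero, zero_dotProduct, mul_zero, zero_add, sub_zero]
  have hN : α₀ * a ≤ Kμ *ᵥ q ⬝ᵥ q := hcoer q
  have hpq : cΩ ^ 2 * m ≤ a := hpoin q
  rw [le_div_iff₀ (by positivity)]
  have h1 : cΩ * Real.sqrt m ≤ Real.sqrt a := by
    rw [show cΩ * Real.sqrt m = Real.sqrt (cΩ ^ 2 * m) from by
      rw [Real.sqrt_mul (by positivity), Real.sqrt_sq hcΩ.le]]
    exact Real.sqrt_le_sqrt hpq
  have hsq : Real.sqrt a * Real.sqrt a = a := Real.mul_self_sqrt ha.le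
  nlinarith [mul_le_mul_of_nonneg_right h1 hsa.le, mul_le_mul_of_nonneg_left h1 hα₀.le]
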